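/- Let δ ≥ 0 be such that the deviation vector p^δ (for the weighted bottleneck Hamming distance setting) is feasible. Then for every δ' ≥ δ, the deviation vector p^{δ'} is also feasible. -/

import Mathlib

open Finset

noncomputable section

variable {S : Type*}

/-- A deviation vector `p` is feasible: it respects the bounds `l ≤ p ≤ u`
(interpreted in the extended reals) and makes `Fstar` a minimum-cost member
of `𝓕` with respect to `c - p`. -/
def IsFeasibleDev (𝓕 : Finset (Finset S)) (Fstar : Finset S)
    (c : S → ℝ) (l u : S → EReal) (p : S → ℝ) : Prop :=
  (∀ s, l s ≤ (p s : EReal) ∧ (p s : EReal) ≤ u s) ∧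
  ∀ F ∈ 𝓕, ∑ s ∈ Fstar, (c s - p s) ≤ ∑ s ∈ F, (c s - p s)

/-- The weighted bottleneck Hamming distance `H_{∞,w}(p) = max {w(s) : p(s) ≠ 0}`,
with the maximum over the empty set taken to be `0`. -/
def Hbot [Fintype S] (w p : S → ℝ) : ℝ :=
  ((((univ : Finset S).filter fun s => p s ≠ 0)).image w).max.unbotD 0

/-- The constant `m` from the bottleneck Hamming distance setting. -/
def mB [DecidableEq S] (𝓕 : Finset (Finset S)) (Fstar : Finset S)
    (c : S → ℝ) (l u : S → EReal) : ℝ :=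
  max 0 ((𝓕.image fun F =>
    (∑ s ∈ Fstar, c s) - (∑ s ∈ F, c s)
      - ∑ s ∈ (Fstar \ F).filter (fun s => u s < 0), (u s).toReal
      + ∑ s ∈ (F \ Fstar).filter (fun s => 0 < l s), (l s).toReal).max.unbotD 0)

/-- The special deviation vector `p^δ` of the bottleneck Hamming distance setting. -/
def pB [DecidableEq S] (𝓕 : Finset (Finset S)) (Fstar : Finset S)
    (c : S → ℝ) (l u : S → EReal) (w : S → ℝ) (δ : ℝ) (s : S) : ℝ :=
  if w s ≤ δ then
    if s ∈ Fstar then (if u s = ⊤ then mB 𝓕 Fstar c l u else (u s).toReal)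
    else (if l s = ⊥ then -(mB 𝓕 Fstar c l u) else (l s).toReal)
  else 0

theorem bottleneck_monotone_feasible [Fintype S] [DecidableEq S]
    (𝓕 : Finset (Finset S)) (Fstar : Finset S) (c w : S → ℝ) (l u : S → EReal)
    (hw : ∀ s, 0 < w s) (hl : ∀ s, l s ≠ ⊤) (hu : ∀ s, u s ≠ ⊥)
    (hlu : ∀ s, l s ≤ u s) (h𝓕 : 𝓕.Nonempty) (hF : Fstar ∈ 𝓕)
    (δ : ℝ) (hδ : 0 ≤ δ)
    (hfeas : IsFeasibleDev 𝓕 Fstar c l u (pB 𝓕 Fstar c l u w δ)) :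
    ∀ δ' : ℝ, δ ≤ δ' → IsFeasibleDev 𝓕 Fstar c l u (pB 𝓕 Fstar c l u w δ') := by
  intro δ' hδ'
  obtain ⟨hb, hopt⟩ := hfeas
  set p := pB 𝓕 Fstar c l u w δ with hp
  set p' := pB 𝓕 Fstar c l u w δ' with hp'
  have hm : (0:ℝ) ≤ mB 𝓕 Fstar c l u := le_max_left _ _
  have heq : ∀ s, w s ≤ δ → p' s = p s := by
    intro s h
    simp [hp, hp', pB, h, h.trans hδ']
  have hzero : ∀ s, ¬ w s ≤ δ → p s = 0 := by
    intro s h; simp [hp, pB, h]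
  have hub : ∀ s, ¬ w s ≤ δ → l s ≤ 0 ∧ (0:EReal) ≤ u s := by
    intro s h
    have h1 := (hb s).1
    have h2 := (hb s).2
    rw [hzero s h] at h1 h2
    rw [EReal.coe_zero] at h1 h2
    exact ⟨h1, h2⟩
  -- bounds for p'
  have hb' : ∀ s, l s ≤ (p' s : EReal) ∧ (p' s : EReal) ≤ u s := by
    intro s
    by_cases h1 : w s ≤ δ
    · rw [heq s h1]; exact hb s
    · obtain ⟨hls, hus⟩ := hub s h1
      by_cases h2 : w s ≤ δ'
      · by_cases h3 : s ∈ Fstar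
        · by_cases h4 : u s = ⊤
          · have : p' s = mB 𝓕 Fstar c l u := by simp [hp', pB, h2, h3, h4]
            rw [this, h4]
            refine ⟨le_trans hls ?_, le_top⟩
            exact_mod_cast hm
          · have : p' s = (u s).toReal := by simp [hp', pB, h2, h3, h4]
            rw [this, EReal.coe_toReal h4 (hu s)]
            exact ⟨hlu s, le_refl _⟩
        · by_cases h4 : l s = ⊥
          · have : p' s = -(mB 𝓕 Fstar c l u) := by simp [hp', pB, h2, h3, h4]
            rw [this, h4]
            refine ⟨bot_le, le_trans ?_ hus⟩
            exact_mod_cast neg_nonpos.mpr hm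
          · have : p' s = (l s).toReal := by simp [hp', pB, h2, h3, h4]
            rw [this, EReal.coe_toReal (hl s) h4]
            exact ⟨le_refl _, hlu s⟩
      · have : p' s = 0 := by simp [hp', pB, h2]
        rw [this, EReal.coe_zero]
        exact ⟨hls, hus⟩
  refine ⟨hb', ?_⟩
  -- monotonicity facts
  have hmono_in : ∀ s ∈ Fstar, p s ≤ p' s := by
    intro s hs
    by_cases h1 : w s ≤ δ
    · rw [heq s h1]
    · rw [hzero s h1]
      obtain ⟨hls, hus⟩ := hub s h1
      by_cases h2 : w s ≤ δ'
      · by_cases h4 : u s = ⊤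
        · have : p' s = mB 𝓕 Fstar c l u := by simp [hp', pB, h2, hs, h4]
          rw [this]; exact hm
        · have : p' s = (u s).toReal := by simp [hp', pB, h2, hs, h4]
          rw [this]
          have := EReal.toReal_le_toReal hus (by simp) h4
          simpa using this
      · simp [hp', pB, h2]
  have hmono_out : ∀ s, s ∉ Fstar → p' s ≤ p s := by
    intro s hs
    by_cases h1 : w s ≤ δ
    · rw [heq s h1]
    · rw [hzero s h1]
      obtain ⟨hls, hus⟩ := hub s h1
      by_cases h2 : w s ≤ δ'
      · by_cases h4 : l s = ⊥
        · have : p' s = -(mB 𝓕 Fstar c l u) := by simp [hp', pB, h2, hs, h4]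
          rw [this]; linarith
        · have : p' s = (l s).toReal := by simp [hp', pB, h2, hs, h4]
          rw [this]
          have := EReal.toReal_le_toReal hls h4 (by simp)
          simpa using this
      · simp [hp', pB, h2]
  intro F hFmem
  have key : ∑ s ∈ F, (p' s - p s) ≤ ∑ s ∈ Fstar, (p' s - p s) := by
    have h1 : ∑ s ∈ F, (p' s - p s) ≤ ∑ s ∈ F ∩ Fstar, (p' s - p s) := by
      rw [← Finset.sum_inter_add_sum_sdiff F Fstar fun s => p' s - p s]
      have : ∑ s ∈ F \ Fstar, (p' s - p s) ≤ 0 := by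
        apply Finset.sum_nonpos
        intro s hs
        have := hmono_out s (Finset.mem_sdiff.mp hs).2
        linarith
      linarith
    have h2 : ∑ s ∈ F ∩ Fstar, (p' s - p s) ≤ ∑ s ∈ Fstar, (p' s - p s) := by
      apply Finset.sum_le_sum_of_subset_of_nonneg (Finset.inter_subset_right)
      intro s hs _
      have := hmono_in s hs
      linarith
    linarith
  have hF0 := hopt F hFmem
  simp only [Finset.sum_sub_distrib] at hF0 key ⊢
  linarith
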